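/- With S = k[x_1,...,x_d] and monomials f^1,...,f^m, if s_1,...,s_m ∈ S satisfy the syzygy equations s_1·f^{1,2} = s_2·f^{2,3} = ⋯ = s_{m−1}·f^{m−1,m} = −s_m·f^{1,m} (where f^{i,j} = lcm(f^i,f^j)), then lcm(f^1,...,f^m) divides s_1·f^{1,2}. -/

import Mathlib

open MvPolynomial

lemma monomial_dvd_of_support {K : Type*} [Field K] {d : ℕ} (b : Fin d →₀ ℕ)
    (p : MvPolynomial (Fin d) K) (h : ∀ c ∈ p.support, b ≤ c) :
    (monomial b (1 : K)) ∣ p := by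
  classical
  refine ⟨∑ c ∈ p.support, monomial (c - b) (coeff c p), ?_⟩
  rw [Finset.mul_sum]
  conv_lhs => rw [p.as_sum]
  refine Finset.sum_congr rfl fun c hc => ?_
  show monomial c (coeff c p) = monomial b 1 * monomial (c - b) (coeff c p)
  rw [monomial_mul, one_mul, add_tsub_cancel_of_le (h c hc)]

lemma le_of_mem_support_mul_monomial {K : Type*} [Field K] {d : ℕ} {b c : Fin d →₀ ℕ}
    {p : MvPolynomial (Fin d) K} (h : c ∈ (p * monomial b (1 : K)).support) : b ≤ c := by
  rw [MvPolynomial.mem_support_iff, coeff_mul_monomial'] at h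
  by_contra hb
  simp [hb] at h

/-- Equations (2.3): if `s_0 f^{0,1} = s_1 f^{1,2} = ⋯ = s_{m−2} f^{m−2,m−1} = −s_{m−1} f^{0,m−1}`
(0-indexed; `f^{i,j} = lcm(f^i, f^j)` with `a i` the exponent vector of the monomial `f^i`),
then `lcm(f^0,…,f^{m−1})` divides `s_0 · f^{0,1}`. -/
theorem stmt3 {K : Type*} [Field K] (d m : ℕ) (hm : 2 ≤ m)
    (a : ℕ → (Fin d →₀ ℕ)) (s : ℕ → MvPolynomial (Fin d) K)
    (h1 : ∀ j : ℕ, j + 2 < m →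
      s j * monomial (a j ⊔ a (j + 1)) (1 : K)
        = s (j + 1) * monomial (a (j + 1) ⊔ a (j + 2)) (1 : K))
    (h2 : s (m - 2) * monomial (a (m - 2) ⊔ a (m - 1)) (1 : K)
        = - (s (m - 1) * monomial (a 0 ⊔ a (m - 1)) (1 : K))) :
    (monomial ((Finset.range m).sup a) (1 : K)) ∣ s 0 * monomial (a 0 ⊔ a 1) (1 : K) := by
  set p := s 0 * monomial (a 0 ⊔ a 1) (1 : K) with hp
  have key : ∀ j : ℕ, j + 1 < m → p = s j * monomial (a j ⊔ a (j + 1)) (1 : K) := by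
    intro j
    induction j with
    | zero => intro _; rfl
    | succ n ih =>
      intro hn
      have hn2 : n + 2 < m := by omega
      rw [ih (by omega), h1 n hn2]
  apply monomial_dvd_of_support
  intro c hc
  rw [Finset.sup_le_iff]
  intro i hi
  rw [Finset.mem_range] at hi
  rcases lt_or_eq_of_le (Nat.succ_le_of_lt hi) with h | h
  · -- i + 1 < m
    have := key i h
    rw [this] at hc
    exact le_trans le_sup_left (le_of_mem_support_mul_monomial hc)
  · -- i + 1 = m, i.e. i = m - 1
    have him : i = m - 1 := by omega
    have hm2 : (m - 2) + 1 < m := by omega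
    have heq : p = -(s (m - 1) * monomial (a 0 ⊔ a (m - 1)) (1 : K)) := by
      rw [key (m - 2) hm2]
      have : m - 2 + 1 = m - 1 := by omega
      rw [this]
      exact h2
    rw [heq, support_neg] at hc
    subst him
    exact le_trans le_sup_right (le_of_mem_support_mul_monomial hc)
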